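/- In NIM with Cash with subtraction set A = {1, 2} and even n with n ≡ 0 or 2 or 4 (mod 6), writing M₁(n) = n/2 + 1 and M₂(n) = n/2: for every k ≥ 0, if M₁(n) + k ≤ d < M₁(n) + k + 1 (i.e., d = n/2 + 1 + k) and e < M₂(n) + k + 1, and moreover d is below the upper-class threshold (both players middle class), then Player 1 wins NIM({1,2}; n; d, e). -/
import Mathlib


/-- Upper-class threshold for the winning player in NIM({1,2};n)
(Theorem 3.1 with L = 2, writing n = 3k + i). -/
def nimUwin12 (n : ℕ) : ℕ :=
  if n % 3 = 2 then 2 * (n / 3 + 1) else 2 * (n / 3) + n % 3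

/-- Upper-class threshold for the losing player in NIM({1,2};n). -/
def nimUlose12 (n : ℕ) : ℕ :=
  if n < 2 then n / 2 else if n % 3 = 2 then 2 * (n / 3) + 1 else 2 * (n / 3)

/-- Player 1's upper-class threshold U₁(n) for A = {1,2}
(the second player wins ordinary NIM({1,2};n) iff 3 ∣ n). -/
def nimU1 (n : ℕ) : ℕ := if n % 3 = 0 then nimUlose12 n else nimUwin12 n

/-- Player 2's upper-class threshold U₂(n) for A = {1,2}. -/
def nimU2 (n : ℕ) : ℕ := if n % 3 = 0 then nimUwin12 n else nimUlose12 n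

/-- Explicit characterization of the winning positions of NIM({1,2}) with cash. -/
def nimPred12 (n m m' : ℕ) : Prop :=
  1 ≤ n ∧ 1 ≤ m ∧
    ((n % 3 = 0 ∧ m' < m ∧ 3 * m' < 2 * n) ∨
     (n % 3 = 1 ∧ (2 * (n / 3) + 1 ≤ m ∨ m' < m)) ∨
     (n % 3 = 2 ∧ (2 * (n / 3) + 2 ≤ m ∨ m' < m)))

instance (n m m' : ℕ) : Decidable (nimPred12 n m m') := by
  unfold nimPred12; infer_instance

theorem nimPred12_char (W : ℕ → ℕ → ℕ → Prop)
    (hW : ∀ n m m', W n m m' ↔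
      ∃ a ∈ ({1, 2} : Finset ℕ), a ≤ n ∧ a ≤ m ∧ ¬ W (n - a) m' (m - a)) :
    ∀ n m m', W n m m' ↔ nimPred12 n m m' := by
  intro n
  induction n using Nat.strong_induction_on with
  | _ n ih =>
    intro m m'
    rcases Nat.eq_zero_or_pos n with hn0 | hn0
    · subst hn0
      rw [hW]
      constructor
      · rintro ⟨a, ha, han, -, -⟩
        simp only [Finset.mem_insert, Finset.mem_singleton] at ha
        omega
      · rintro ⟨h, -⟩; omega
    · rw [hW]
      constructor
      · rintro ⟨a, ha, han, ham, hw⟩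
        simp only [Finset.mem_insert, Finset.mem_singleton] at ha
        rcases ha with rfl | rfl
        · rw [ih (n - 1) (by omega)] at hw
          unfold nimPred12 at hw ⊢
          omega
        · rw [ih (n - 2) (by omega)] at hw
          unfold nimPred12 at hw ⊢
          omega
      · intro h
        by_cases h1 : nimPred12 (n - 1) m' (m - 1)
        · refine ⟨2, by simp, ?_, ?_, ?_⟩
          · unfold nimPred12 at h h1; omega
          · unfold nimPred12 at h h1; omega
          · rw [ih (n - 2) (by omega)]
            unfold nimPred12 at h h1 ⊢
            omega
        · refine ⟨1, by simp, by omega, ?_, ?_⟩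
          · unfold nimPred12 at h; omega
          · rw [ih (n - 1) (by omega)]
            exact h1

/-- Staircase theorem rung for A = {1,2}, even n with n ≡ 0, 2 or 4 (mod 6):
if d = M₁(n) + k = n/2 + 1 + k, e < M₂(n) + k + 1 = n/2 + k + 1, and d is
below the upper-class threshold, then Player 1 wins. -/
theorem nimCash_12_staircase_p1 (W : ℕ → ℕ → ℕ → Prop)
    (hW : ∀ n m m', W n m m' ↔
      ∃ a ∈ ({1, 2} : Finset ℕ), a ≤ n ∧ a ≤ m ∧ ¬ W (n - a) m' (m - a))
    (n d e k : ℕ) (hn : n % 6 = 0 ∨ n % 6 = 2 ∨ n % 6 = 4)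
    (hd : d = n / 2 + 1 + k) (he : e < n / 2 + k + 1)
    (hupper : d < nimU1 n) :
    W n d e := by
  rw [nimPred12_char W hW]
  unfold nimU1 nimUlose12 nimUwin12 at hupper
  unfold nimPred12
  split_ifs at hupper <;> omega
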